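/- arXiv:2105.11417 — 6 statements merged into one kernel-verified Lean document; each statement's English description precedes it below -/
import Mathlib

section
/- Let n, p, q be natural numbers, m a positive natural number, and let L be a real 2D convolution filter L ∈ ℝ^{m×m×(2p+1)×(2q+1)}. Let J(L) denote the Jacobian of the convolution with filter L on m-channel n×n inputs (defined explicitly in the context), and let conv_transpose(L) be the filter with [conv_transpose(L)]_{a,b,k,l} = L_{b,a,2p-k,2q-l}. Then J(conv_transpose(L)) = (J(L))ᵀ. -/
open Matrix

open scoped Kronecker

/-- The shift matrix `P^(k)`: the `n × n` matrix with `P^(k)_{i,j} = 1` if `i - j = k`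
(as integers) and `0` otherwise. -/
def shiftP (n : ℕ) (k : ℤ) : Matrix (Fin n) (Fin n) ℝ :=
  Matrix.of fun i j => if ((i : ℕ) : ℤ) - ((j : ℕ) : ℤ) = k then 1 else 0

/-- The Jacobian of the 2D convolution (zero padding, stride 1) with a real filter
`L ∈ ℝ^{m×m×(2p+1)×(2q+1)}` on `m`-channel `n×n` inputs: the block matrix whose `(a,b)` block is
`Σ_{i=-p}^{p} Σ_{j=-q}^{q} L_{a,b,p+i,q+j} • (P^(i) ⊗ P^(j))`. -/
def convJacobian (n p q m : ℕ)
    (L : Fin m → Fin m → Fin (2 * p + 1) → Fin (2 * q + 1) → ℝ) :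
    Matrix (Fin m × Fin n × Fin n) (Fin m × Fin n × Fin n) ℝ :=
  Matrix.of fun x y =>
    ∑ k : Fin (2 * p + 1), ∑ l : Fin (2 * q + 1),
      L x.1 y.1 k l *
        (shiftP n (((k : ℕ) : ℤ) - (p : ℤ)) ⊗ₖ shiftP n (((l : ℕ) : ℤ) - (q : ℤ))) x.2 y.2

lemma shiftP_neg (n : ℕ) (k : ℤ) (i j : Fin n) :
    shiftP n (-k) i j = shiftP n k j i := by
  simp only [shiftP, Matrix.of_apply]
  have : (↑↑i - ↑↑j = -k) ↔ (↑↑j - ↑↑i = k) := by omega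
  simp [this]

lemma rev_sub (p : ℕ) (k : Fin (2 * p + 1)) :
    ((k.rev : ℕ) : ℤ) - (p : ℤ) = -(((k : ℕ) : ℤ) - (p : ℤ)) := by
  have := k.isLt
  simp [Fin.rev]
  omega

/-- For a real filter `L`, the Jacobian of the convolution with
`conv_transpose(L)_{a,b,k,l} = L_{b,a,2p-k,2q-l}` equals the transpose of the Jacobian of the
convolution with `L`. -/
theorem convJacobian_conv_transpose (n p q m : ℕ) (hm : 0 < m)
    (L : Fin m → Fin m → Fin (2 * p + 1) → Fin (2 * q + 1) → ℝ) :
    convJacobian n p q m (fun a b k l => L b a k.rev l.rev) = (convJacobian n p q m L)ᵀ := by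
  ext x y
  simp only [convJacobian, Matrix.transpose_apply, Matrix.of_apply]
  rw [← Equiv.sum_comp (Fin.revPerm (n := 2 * p + 1))]
  refine Finset.sum_congr rfl fun k _ => ?_
  rw [← Equiv.sum_comp (Fin.revPerm (n := 2 * q + 1))]
  refine Finset.sum_congr rfl fun l _ => ?_
  simp only [Fin.revPerm_apply, Fin.rev_rev]
  congr 1
  obtain ⟨x1, x2, x3⟩ := x
  obtain ⟨y1, y2, y3⟩ := y
  simp only [Matrix.kroneckerMap_apply, rev_sub, shiftP_neg]
end

section
/- Let n, p, q be natural numbers, m a positive natural number, and let L ∈ ℝ^{m×m×(2p+1)×(2q+1)} be a real 2D convolution filter, with Jacobian J(L) on m-channel n×n inputs (defined explicitly in the context). Assume n ≥ 2p+1 and n ≥ 2q+1. Then J(L) is skew-symmetric (J(L)ᵀ = -J(L)) if and only if there exists a filter M ∈ ℝ^{m×m×(2p+1)×(2q+1)} such that L = M - conv_transpose(M), where [conv_transpose(M)]_{a,b,k,l} = M_{b,a,2p-k,2q-l}. -/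
open Matrix

open scoped Kronecker

lemma convJacobian_eval (n p q m : ℕ) (hp : 2 * p + 1 ≤ n) (hq : 2 * q + 1 ≤ n)
    (L : Fin m → Fin m → Fin (2 * p + 1) → Fin (2 * q + 1) → ℝ)
    (a b : Fin m) (k : Fin (2 * p + 1)) (l : Fin (2 * q + 1)) :
    convJacobian n p q m L (a, ⟨k, lt_of_lt_of_le k.2 hp⟩, ⟨l, lt_of_lt_of_le l.2 hq⟩)
      (b, ⟨p, by omega⟩, ⟨q, by omega⟩) = L a b k l := by
  unfold convJacobian shiftP
  simp only [Matrix.of_apply, Matrix.kroneckerMap_apply, Fin.val_mk]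
  rw [Finset.sum_eq_single k]
  · rw [Finset.sum_eq_single l]
    · simp
    · intro l' _ hne
      have hne' : (l' : ℕ) ≠ (l : ℕ) := fun h => hne (Fin.ext h)
      have : ¬ (((l:ℕ):ℤ) - ((q:ℕ):ℤ) = ((l':ℕ):ℤ) - (q:ℤ)) := by omega
      simp [this]
    · simp
  · intro k' _ hne
    have hne' : (k' : ℕ) ≠ (k : ℕ) := fun h => hne (Fin.ext h)
    have : ¬ (((k:ℕ):ℤ) - ((p:ℕ):ℤ) = ((k':ℕ):ℤ) - (p:ℤ)) := by omega
    simp [this]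
  · simp

lemma convJacobian_eval' (n p q m : ℕ) (hp : 2 * p + 1 ≤ n) (hq : 2 * q + 1 ≤ n)
    (L : Fin m → Fin m → Fin (2 * p + 1) → Fin (2 * q + 1) → ℝ)
    (a b : Fin m) (k : Fin (2 * p + 1)) (l : Fin (2 * q + 1)) :
    convJacobian n p q m L (a, ⟨p, by omega⟩, ⟨q, by omega⟩)
      (b, ⟨k, lt_of_lt_of_le k.2 hp⟩, ⟨l, lt_of_lt_of_le l.2 hq⟩) = L a b k.rev l.rev := by
  unfold convJacobian shiftP
  simp only [Matrix.of_apply, Matrix.kroneckerMap_apply, Fin.val_mk]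
  have hkr : (k.rev : ℕ) = 2 * p - k := by rw [Fin.val_rev]; omega
  have hlr : (l.rev : ℕ) = 2 * q - l := by rw [Fin.val_rev]; omega
  rw [Finset.sum_eq_single k.rev]
  · rw [Finset.sum_eq_single l.rev]
    · have h1 : ((p:ℕ):ℤ) - ((k:ℕ):ℤ) = ((k.rev:ℕ):ℤ) - (p:ℤ) := by rw [hkr]; push_cast; omega
      have h2 : ((q:ℕ):ℤ) - ((l:ℕ):ℤ) = ((l.rev:ℕ):ℤ) - (q:ℤ) := by rw [hlr]; push_cast; omega
      simp [h1, h2]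
    · intro l' _ hne
      have hne' : (l' : ℕ) ≠ (l.rev : ℕ) := fun h => hne (Fin.ext h)
      rw [hlr] at hne'
      have : ¬ (((q:ℕ):ℤ) - ((l:ℕ):ℤ) = ((l':ℕ):ℤ) - (q:ℤ)) := by omega
      simp [this]
    · simp
  · intro k' _ hne
    have hne' : (k' : ℕ) ≠ (k.rev : ℕ) := fun h => hne (Fin.ext h)
    rw [hkr] at hne'
    have : ¬ (((p:ℕ):ℤ) - ((k:ℕ):ℤ) = ((k':ℕ):ℤ) - (p:ℤ)) := by omega
    simp [this]
  · simp

lemma sum_rev {α : Type*} [AddCommMonoid α] {N : ℕ} (f : Fin N → α) :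
    ∑ i : Fin N, f i.rev = ∑ i : Fin N, f i :=
  Fintype.sum_bijective Fin.rev Fin.rev_bijective _ _ (fun _ => rfl)

lemma sum_rev₂ {α : Type*} [AddCommMonoid α] {N K : ℕ} (f : Fin N → Fin K → α) :
    ∑ k : Fin N, ∑ l : Fin K, f k.rev l.rev = ∑ k : Fin N, ∑ l : Fin K, f k l := by
  rw [sum_rev (fun k => ∑ l : Fin K, f k l.rev)]
  exact Finset.sum_congr rfl fun k _ => sum_rev _

lemma kron_rev (n p q : ℕ) (k : Fin (2 * p + 1)) (l : Fin (2 * q + 1))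
    (i j : Fin n × Fin n) :
    (shiftP n (((k.rev : ℕ) : ℤ) - (p : ℤ)) ⊗ₖ shiftP n (((l.rev : ℕ) : ℤ) - (q : ℤ))) i j =
    (shiftP n (((k : ℕ) : ℤ) - (p : ℤ)) ⊗ₖ shiftP n (((l : ℕ) : ℤ) - (q : ℤ))) j i := by
  have hk := k.2; have hl := l.2
  have hkr : (k.rev : ℕ) = 2 * p - (k:ℕ) := by rw [Fin.val_rev]; omega
  have hlr : (l.rev : ℕ) = 2 * q - (l:ℕ) := by rw [Fin.val_rev]; omega
  have h1 : (((i.1:ℕ):ℤ) - ((j.1:ℕ):ℤ) = ((k.rev:ℕ):ℤ) - (p:ℤ)) ↔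
      (((j.1:ℕ):ℤ) - ((i.1:ℕ):ℤ) = ((k:ℕ):ℤ) - (p:ℤ)) := by rw [hkr]; omega
  have h2 : (((i.2:ℕ):ℤ) - ((j.2:ℕ):ℤ) = ((l.rev:ℕ):ℤ) - (q:ℤ)) ↔
      (((j.2:ℕ):ℤ) - ((i.2:ℕ):ℤ) = ((l:ℕ):ℤ) - (q:ℤ)) := by rw [hlr]; omega
  simp only [Matrix.kroneckerMap_apply, shiftP, Matrix.of_apply, h1, h2]

/-- If `n ≥ 2p+1` and `n ≥ 2q+1`, the Jacobian of the convolution with a real filter `L` is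
skew-symmetric if and only if `L = M - conv_transpose(M)` for some filter `M`, where
`conv_transpose(M)_{a,b,k,l} = M_{b,a,2p-k,2q-l}`. -/
theorem convJacobian_skew_iff (n p q m : ℕ) (hm : 0 < m)
    (hp : 2 * p + 1 ≤ n) (hq : 2 * q + 1 ≤ n)
    (L : Fin m → Fin m → Fin (2 * p + 1) → Fin (2 * q + 1) → ℝ) :
    (convJacobian n p q m L)ᵀ = -(convJacobian n p q m L) ↔
      ∃ M : Fin m → Fin m → Fin (2 * p + 1) → Fin (2 * q + 1) → ℝ,
        L = fun a b k l => M a b k l - M b a k.rev l.rev := by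

  constructor
  · intro hJ
    have hrel : ∀ a b k l, L b a k l = - L a b k.rev l.rev := by
      intro a b k l
      have h := congrFun (congrFun hJ (a, ⟨p, by omega⟩, ⟨q, by omega⟩))
        (b, ⟨(k:ℕ), lt_of_lt_of_le k.2 hp⟩, ⟨(l:ℕ), lt_of_lt_of_le l.2 hq⟩)
      rw [Matrix.transpose_apply, Matrix.neg_apply,
        convJacobian_eval n p q m hp hq L b a k l,
        convJacobian_eval' n p q m hp hq L a b k l] at h
      exact h
    refine ⟨fun a b k l => L a b k l / 2, ?_⟩
    funext a b k l
    have h1 := hrel a b k.rev l.rev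
    simp only [Fin.rev_rev] at h1
    have h2 := hrel a b k l
    simp only []
    linarith
  · rintro ⟨M, rfl⟩
    ext x y
    rw [Matrix.transpose_apply, Matrix.neg_apply]
    show convJacobian n p q m _ y x = -(convJacobian n p q m _ x y)
    unfold convJacobian
    simp only [Matrix.of_apply]
    conv_lhs => rw [← sum_rev₂ (fun k l => (M y.1 x.1 k l - M x.1 y.1 k.rev l.rev) *
      (shiftP n (((k : ℕ) : ℤ) - (p : ℤ)) ⊗ₖ shiftP n (((l : ℕ) : ℤ) - (q : ℤ))) y.2 x.2)]
    rw [← Finset.sum_neg_distrib]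
    refine Finset.sum_congr rfl fun k _ => ?_
    rw [← Finset.sum_neg_distrib]
    refine Finset.sum_congr rfl fun l _ => ?_
    simp only [Fin.rev_rev, kron_rev n p q k l y.2 x.2]
    ring
end

section
/- Let J ∈ ℝ^{n×n} be a real skew-symmetric matrix (Jᵀ = -J) and let k be a natural number. Then ‖exp(J) - S_k(J)‖₂ ≤ ‖J‖₂^k / k!, where S_k(J) = Σ_{i=0}^{k-1} J^i / i! (with S_0(J) = 0). -/
open Matrix

open scoped Matrix.Norms.L2Operator

lemma norm_exp_skew_le {n : ℕ} (A : Matrix (Fin n) (Fin n) ℝ) (hA : Aᵀ = -A) :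
    ‖NormedSpace.exp A‖ ≤ 1 := by
  rcases Nat.eq_zero_or_pos n with h0 | hn
  · subst h0
    have : NormedSpace.exp A = 0 := Subsingleton.elim _ _
    simp [this]
  · have : Nonempty (Fin n) := ⟨⟨0, hn⟩⟩
    have hstar : star (NormedSpace.exp A) = NormedSpace.exp (-A) := by
      rw [Matrix.star_eq_conjTranspose, ← Matrix.exp_conjTranspose,
        Matrix.conjTranspose_eq_transpose_of_trivial, hA]
    have hmul : star (NormedSpace.exp A) * NormedSpace.exp A = 1 := by
      rw [hstar, ← Matrix.exp_add_of_commute _ _ (Commute.neg_left (Commute.refl A))]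
      simp
    have h2 : ‖NormedSpace.exp A‖ * ‖NormedSpace.exp A‖ = 1 := by
      rw [← CStarRing.norm_star_mul_self, hmul, norm_one]
    nlinarith [norm_nonneg (NormedSpace.exp A)]

lemma key : ∀ (k : ℕ) {n : ℕ} (A : Matrix (Fin n) (Fin n) ℝ), Aᵀ = -A →
    ‖NormedSpace.exp A - ∑ i ∈ Finset.range k, ((Nat.factorial i : ℝ))⁻¹ • A ^ i‖ ≤
      ‖A‖ ^ k / (Nat.factorial k : ℝ) := by
  intro k
  induction k with
  | zero =>
    intro n A hA
    simpa using norm_exp_skew_le A hA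
  | succ k ih =>
    intro n A hA
    -- the function and its derivative
    set f : ℝ → Matrix (Fin n) (Fin n) ℝ := fun t =>
      NormedSpace.exp (t • A) -
        ∑ i ∈ Finset.range (k + 1), (((Nat.factorial i : ℝ))⁻¹ * t ^ i) • A ^ i with hf
    set D : ℝ → Matrix (Fin n) (Fin n) ℝ := fun t =>
      A * (NormedSpace.exp (t • A) -
        ∑ i ∈ Finset.range k, (((Nat.factorial i : ℝ))⁻¹ * t ^ i) • A ^ i) with hD
    have hderiv : ∀ t : ℝ, HasDerivAt f (D t) t := by
      intro t
      have h1 : HasDerivAt (fun u : ℝ => NormedSpace.exp (u • A))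
          (A * NormedSpace.exp (t • A)) t := hasDerivAt_exp_smul_const' A t
      have h2 : HasDerivAt (fun u : ℝ =>
          ∑ i ∈ Finset.range (k + 1), (((Nat.factorial i : ℝ))⁻¹ * u ^ i) • A ^ i)
          (∑ i ∈ Finset.range (k + 1),
            (((Nat.factorial i : ℝ))⁻¹ * (i * t ^ (i - 1))) • A ^ i) t := by
        apply HasDerivAt.fun_sum
        intro i _
        exact ((hasDerivAt_pow i t).const_mul ((Nat.factorial i : ℝ))⁻¹).smul_const (A ^ i)
      have heq : ∑ i ∈ Finset.range (k + 1),
            (((Nat.factorial i : ℝ))⁻¹ * (i * t ^ (i - 1))) • A ^ i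
          = ∑ i ∈ Finset.range k, (((Nat.factorial i : ℝ))⁻¹ * t ^ i) • (A * A ^ i) := by
        rw [Finset.sum_range_succ']
        simp only [Nat.cast_zero, zero_mul, mul_zero, zero_smul, add_zero]
        refine Finset.sum_congr rfl fun i _ => ?_
        rw [← pow_succ']
        congr 1
        rw [Nat.factorial_succ]
        push_cast
        have h1 : (Nat.factorial i : ℝ) ≠ 0 := Nat.cast_ne_zero.mpr (Nat.factorial_ne_zero i)
        have h2 : (i : ℝ) + 1 ≠ 0 := by positivity
        field_simp
      have := h1.sub (heq ▸ h2)
      refine this.congr_deriv ?_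
      simp only [hD, mul_sub, Finset.mul_sum, mul_smul_comm]
    have hDcont : Continuous D := by
      apply Continuous.mul continuous_const
      apply Continuous.sub
      · exact (show Continuous (NormedSpace.exp : Matrix (Fin n) (Fin n) ℝ → Matrix (Fin n) (Fin n) ℝ) from
          open scoped Matrix.Norms.Operator in NormedSpace.exp_continuous).comp
          (continuous_id.smul continuous_const)
      · exact continuous_finset_sum _ fun i _ =>
          ((continuous_const.mul (continuous_pow i)).smul continuous_const)
    have hftc : ∫ t in (0:ℝ)..1, D t = f 1 - f 0 :=
      intervalIntegral.integral_eq_sub_of_hasDerivAt (fun t _ => hderiv t)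
        (hDcont.intervalIntegrable 0 1)
    have hf1 : f 1 = NormedSpace.exp A -
        ∑ i ∈ Finset.range (k + 1), ((Nat.factorial i : ℝ))⁻¹ • A ^ i := by
      simp [hf]
    have hf0 : f 0 = 0 := by
      rw [hf]
      simp only [zero_smul, NormedSpace.exp_zero]
      rw [Finset.sum_range_succ']
      simp
    -- bound the integrand
    have hbound : ∀ t ∈ Set.Icc (0:ℝ) 1, ‖D t‖ ≤ ‖A‖ ^ (k + 1) / (Nat.factorial k : ℝ) * t ^ k := by
      intro t ht
      have hsk : (t • A)ᵀ = -(t • A) := by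
        rw [Matrix.transpose_smul, hA, smul_neg]
      have h := ih (t • A) hsk
      have hrw : ∑ i ∈ Finset.range k, ((Nat.factorial i : ℝ))⁻¹ • (t • A) ^ i
          = ∑ i ∈ Finset.range k, (((Nat.factorial i : ℝ))⁻¹ * t ^ i) • A ^ i := by
        refine Finset.sum_congr rfl fun i _ => ?_
        rw [smul_pow, smul_smul]
      rw [hrw] at h
      have hnorm : ‖t • A‖ = t * ‖A‖ := by
        rw [norm_smul, Real.norm_eq_abs, abs_of_nonneg ht.1]
      rw [hnorm] at h
      calc ‖D t‖ ≤ ‖A‖ * ‖NormedSpace.exp (t • A) -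
            ∑ i ∈ Finset.range k, (((Nat.factorial i : ℝ))⁻¹ * t ^ i) • A ^ i‖ := norm_mul_le _ _
        _ ≤ ‖A‖ * ((t * ‖A‖) ^ k / (Nat.factorial k : ℝ)) := by
            exact mul_le_mul_of_nonneg_left h (norm_nonneg A)
        _ = ‖A‖ ^ (k + 1) / (Nat.factorial k : ℝ) * t ^ k := by
            rw [mul_pow]; ring

    -- put it together
    have hnormint : ‖∫ t in (0:ℝ)..1, D t‖ ≤
        ∫ t in (0:ℝ)..1, ‖A‖ ^ (k + 1) / (Nat.factorial k : ℝ) * t ^ k := by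
      calc ‖∫ t in (0:ℝ)..1, D t‖ ≤ ∫ t in (0:ℝ)..1, ‖D t‖ :=
            intervalIntegral.norm_integral_le_integral_norm (by norm_num)
        _ ≤ ∫ t in (0:ℝ)..1, ‖A‖ ^ (k + 1) / (Nat.factorial k : ℝ) * t ^ k := by
            apply intervalIntegral.integral_mono_on (by norm_num)
            · exact (hDcont.norm.intervalIntegrable 0 1)
            · exact (Continuous.intervalIntegrable (by continuity) 0 1)
            · exact hbound
    have hint : ∫ t in (0:ℝ)..1, ‖A‖ ^ (k + 1) / (Nat.factorial k : ℝ) * t ^ k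
        = ‖A‖ ^ (k + 1) / (Nat.factorial (k + 1) : ℝ) := by
      have hp : (∫ t in (0:ℝ)..1, t ^ k) = 1 / ((k : ℝ) + 1) := by
        rw [integral_pow]; simp
      rw [intervalIntegral.integral_const_mul, hp, Nat.factorial_succ]
      push_cast
      have h1 : (Nat.factorial k : ℝ) ≠ 0 := Nat.cast_ne_zero.mpr (Nat.factorial_ne_zero k)
      have h2 : (k : ℝ) + 1 ≠ 0 := by positivity
      rw [div_mul_div_comm]
      congr 1
      · rw [mul_one]
      · ring
    rw [← hf1, ← sub_zero (f 1), ← hf0, ← hftc]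
    rw [hint] at hnormint
    exact hnormint

/-- For a real skew-symmetric matrix `J` (`Jᵀ = -J`), the spectral norm of the difference between
the matrix exponential `exp(J)` and its `k`-term Taylor approximation
`S_k(J) = Σ_{i=0}^{k-1} J^i / i!` is at most `‖J‖₂^k / k!`. -/
theorem norm_exp_sub_taylor_le {n : ℕ} (J : Matrix (Fin n) (Fin n) ℝ)
    (hJ : Jᵀ = -J) (k : ℕ) :
    ‖NormedSpace.exp J - ∑ i ∈ Finset.range k, ((Nat.factorial i : ℝ))⁻¹ • J ^ i‖ ≤
      ‖J‖ ^ k / (Nat.factorial k : ℝ) := by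
  exact key k J hJ
end

section
/- For every real skew-symmetric matrix A ∈ ℝ^{n×n} (Aᵀ = -A), there exists a real skew-symmetric matrix B ∈ ℝ^{n×n} such that exp(B) = exp(A) and ‖B‖₂ ≤ π. -/
open Matrix

open scoped Matrix.Norms.L2Operator

open Polynomial

open Matrix Polynomial
open scoped Matrix.Norms.L2Operator

lemma units_conj_pow' {A : Type*} [Ring A] (u : Aˣ) (x : A) (k : ℕ) :
    ((u : A) * x * (↑u⁻¹ : A)) ^ k = (u : A) * x ^ k * (↑u⁻¹ : A) := by
  induction k with
  | zero => simp
  | succ k ih =>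
      rw [pow_succ, pow_succ, ih]
      simp [mul_assoc]

lemma aeval_units_conj' {R A : Type*} [CommSemiring R] [Ring A] [Algebra R A]
    (u : Aˣ) (x : A) (p : R[X]) :
    aeval ((u : A) * x * (↑u⁻¹ : A)) p = (u : A) * aeval x p * (↑u⁻¹ : A) := by
  induction p using Polynomial.induction_on' with
  | add p q hp hq => rw [map_add, map_add, hp, hq, mul_add, add_mul]
  | monomial k a =>
      rw [aeval_monomial, aeval_monomial, units_conj_pow', ← Algebra.smul_def,
        ← Algebra.smul_def, mul_smul_comm, smul_mul_assoc]

lemma aeval_diagonal' {m : Type*} [Fintype m] [DecidableEq m] {R A : Type*} [CommSemiring R]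
    [CommRing A] [Algebra R A] (d : m → A) (p : R[X]) :
    aeval (Matrix.diagonal d) p = Matrix.diagonal fun i => aeval (d i) p := by
  induction p using Polynomial.induction_on' with
  | add p q hp hq =>
      rw [map_add, hp, hq, diagonal_add]
      funext i
      simp
  | monomial k a =>
      simp only [aeval_monomial, ← Algebra.smul_def, diagonal_pow, ← Matrix.diagonal_smul]
      congr 1

lemma transpose_aeval' {m : Type*} [Fintype m] [DecidableEq m] {R : Type*} [CommRing R]
    (A : Matrix m m R) (p : R[X]) :
    (aeval A p)ᵀ = aeval Aᵀ p := by
  induction p using Polynomial.induction_on' with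
  | add p q hp hq => rw [map_add, map_add, transpose_add, hp, hq]
  | monomial k a =>
      simp only [aeval_monomial, ← Algebra.smul_def, transpose_smul, transpose_pow]

noncomputable def redA (x : ℝ) : ℝ := x - 2 * Real.pi * ⌈x / (2 * Real.pi) - 1 / 2⌉

lemma redA_le (x : ℝ) : redA x ≤ Real.pi := by
  have hπ := Real.pi_pos
  have h2π : (0:ℝ) < 2 * Real.pi := by linarith
  have h1 : x / (2 * Real.pi) - 1 / 2 ≤ (⌈x / (2 * Real.pi) - 1 / 2⌉ : ℝ) := Int.le_ceil _
  have h3 : 2 * Real.pi * (x / (2 * Real.pi)) = x := by field_simp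
  have := mul_le_mul_of_nonneg_left h1 h2π.le
  rw [mul_sub, h3] at this
  unfold redA
  linarith

lemma neg_pi_lt_redA (x : ℝ) : -Real.pi < redA x := by
  have hπ := Real.pi_pos
  have h2π : (0:ℝ) < 2 * Real.pi := by linarith
  have h2 : (⌈x / (2 * Real.pi) - 1 / 2⌉ : ℝ) < x / (2 * Real.pi) - 1 / 2 + 1 :=
    Int.ceil_lt_add_one _
  have h3 : 2 * Real.pi * (x / (2 * Real.pi)) = x := by field_simp
  have := mul_lt_mul_of_pos_left h2 h2π
  rw [mul_add, mul_sub, h3] at this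
  unfold redA
  linarith

lemma redA_zero : redA 0 = 0 := by
  have : ⌈(0:ℝ) / (2 * Real.pi) - 1 / 2⌉ = 0 := by
    rw [zero_div, zero_sub]
    rw [Int.ceil_eq_zero_iff]
    constructor <;> norm_num
  rw [redA, this]
  simp

noncomputable def hredA (x : ℝ) : ℝ := if 0 ≤ x then redA x else - redA (-x)

lemma hredA_zero : hredA 0 = 0 := by simp [hredA, redA_zero]

lemma abs_hredA_le (x : ℝ) : |hredA x| ≤ Real.pi := by
  unfold hredA
  split_ifs with h
  · rw [abs_le]; exact ⟨(neg_pi_lt_redA x).le, redA_le x⟩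
  · rw [abs_neg, abs_le]; exact ⟨(neg_pi_lt_redA (-x)).le, redA_le (-x)⟩

lemma hredA_neg (x : ℝ) : hredA (-x) = - hredA x := by
  rcases lt_trichotomy x 0 with h | h | h
  · rw [hredA, hredA, if_pos (by linarith : (0:ℝ) ≤ -x), if_neg (not_le.mpr h), neg_neg]
  · subst h; simp [hredA_zero]
  · rw [hredA, hredA, if_neg (by linarith), if_pos h.le, neg_neg]

lemma hredA_sub (x : ℝ) : ∃ k : ℤ, hredA x = x - 2 * Real.pi * k := by
  unfold hredA
  split_ifs with h
  · exact ⟨_, rfl⟩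
  · refine ⟨-⌈-x / (2 * Real.pi) - 1 / 2⌉, ?_⟩
    unfold redA
    push_cast
    ring

lemma key_hredA (θ : ℝ) : θ * (hredA (Real.sqrt (θ ^ 2)) / Real.sqrt (θ ^ 2)) = hredA θ := by
  rcases lt_trichotomy θ 0 with h | h | h
  · rw [Real.sqrt_sq_eq_abs, abs_of_neg h, hredA_neg]
    have hθ : θ ≠ 0 := h.ne
    field_simp
  · subst h; simp [hredA_zero]
  · rw [Real.sqrt_sq_eq_abs, abs_of_pos h]
    have hθ : θ ≠ 0 := h.ne'
    field_simp
open Matrix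
open scoped Matrix.Norms.L2Operator

lemma l2_opNorm_diagonal_le {n : ℕ} (v : Fin n → ℂ) {c : ℝ} (hc : 0 ≤ c)
    (h : ∀ i, ‖v i‖ ≤ c) : ‖Matrix.diagonal v‖ ≤ c := by
  rw [Matrix.l2_opNorm_def]
  refine ContinuousLinearMap.opNorm_le_bound _ hc fun x => ?_
  have happ : ((Matrix.toEuclideanLin.trans LinearMap.toContinuousLinearMap)
        (Matrix.diagonal v)) x
      = (WithLp.equiv 2 (Fin n → ℂ)).symm (Matrix.diagonal v *ᵥ (WithLp.equiv 2 _ x)) := rfl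
  rw [happ, EuclideanSpace.norm_eq, EuclideanSpace.norm_eq]
  rw [← Real.sqrt_sq hc, ← Real.sqrt_mul (by positivity)]
  apply Real.sqrt_le_sqrt
  rw [Finset.mul_sum]
  apply Finset.sum_le_sum
  intro i _
  rw [WithLp.equiv_symm_apply, WithLp.ofLp_toLp, Matrix.mulVec_diagonal]
  calc ‖v i * (WithLp.equiv 2 _) x i‖ ^ 2 = ‖v i‖ ^ 2 * ‖(WithLp.equiv 2 _) x i‖ ^ 2 := by
        rw [norm_mul, mul_pow]
    _ ≤ c ^ 2 * ‖x i‖ ^ 2 := by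
        have hx : ‖(WithLp.equiv 2 ((i : Fin n) → ℂ)) x i‖ = ‖x i‖ := rfl
        rw [hx]
        have := h i
        gcongr


lemma l2_opNorm_real_le_complex {n : ℕ} (B : Matrix (Fin n) (Fin n) ℝ) :
    ‖B‖ ≤ ‖B.map (algebraMap ℝ ℂ)‖ := by
  rw [Matrix.l2_opNorm_def]
  refine ContinuousLinearMap.opNorm_le_bound _ (norm_nonneg _) fun x => ?_
  set y : Fin n → ℝ := WithLp.equiv 2 (Fin n → ℝ) x with hy
  have happ : ((Matrix.toEuclideanLin.trans LinearMap.toContinuousLinearMap) B) x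
      = (WithLp.equiv 2 (Fin n → ℝ)).symm (B *ᵥ y) := rfl
  have hv : (B.map (algebraMap ℝ ℂ) *ᵥ fun j => ((y j : ℝ) : ℂ))
      = fun i => (((B *ᵥ y) i : ℝ) : ℂ) := by
    funext i
    simp only [Matrix.mulVec, dotProduct, Matrix.map_apply]
    push_cast
    rfl
  have hle := Matrix.l2_opNorm_mulVec (B.map (algebraMap ℝ ℂ))
      ((WithLp.equiv 2 (Fin n → ℂ)).symm fun j => ((y j : ℝ) : ℂ))
  have harg : (B.map (algebraMap ℝ ℂ) *ᵥ
      ((WithLp.equiv 2 (Fin n → ℂ)).symm fun j => ((y j : ℝ) : ℂ)))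
      = fun i => (((B *ᵥ y) i : ℝ) : ℂ) := hv
  rw [harg] at hle
  have h1 : ‖(WithLp.equiv 2 (Fin n → ℝ)).symm (B *ᵥ y)‖
      = ‖(EuclideanSpace.equiv (Fin n) ℂ).symm fun i => (((B *ᵥ y) i : ℝ) : ℂ)‖ := by
    rw [EuclideanSpace.norm_eq, EuclideanSpace.norm_eq]
    congr 1
    apply Finset.sum_congr rfl
    intro i _
    simp [WithLp.equiv_symm_apply, Complex.norm_real]
  have h2 : ‖(WithLp.equiv 2 (Fin n → ℂ)).symm fun j => ((y j : ℝ) : ℂ)‖ = ‖x‖ := by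
    rw [EuclideanSpace.norm_eq, EuclideanSpace.norm_eq]
    congr 1
    apply Finset.sum_congr rfl
    intro i _
    simp [WithLp.equiv_symm_apply, Complex.norm_real]
    rfl
  rw [happ, h1, ← h2]
  exact hle

/-- For every real skew-symmetric matrix `A` (`Aᵀ = -A`), there exists a real skew-symmetric
matrix `B` with the same matrix exponential and spectral norm at most `π`. -/
theorem exists_skew_exp_eq_norm_le_pi {n : ℕ} (A : Matrix (Fin n) (Fin n) ℝ)
    (hA : Aᵀ = -A) :
    ∃ B : Matrix (Fin n) (Fin n) ℝ,
      Bᵀ = -B ∧ NormedSpace.exp B = NormedSpace.exp A ∧ ‖B‖ ≤ Real.pi := by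
  classical
  have hA' : ∀ i j, A j i = - A i j := fun i j => by simpa using congrFun (congrFun hA i) j
  set Ac : Matrix (Fin n) (Fin n) ℂ := A.map (algebraMap ℝ ℂ) with hAcdef
  have hAcH : Acᴴ = -Ac := by
    ext i j
    simp only [conjTranspose_apply, Matrix.map_apply, Matrix.neg_apply, hAcdef]
    rw [hA' i j]
    simp
  have hH : (Complex.I • Ac).IsHermitian := by
    unfold Matrix.IsHermitian
    rw [Matrix.conjTranspose_smul, hAcH]
    simp [Complex.star_def, Complex.conj_I]
  set θ : Fin n → ℝ := hH.eigenvalues with hθdef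
  set U := hH.eigenvectorUnitary with hUdef
  set u : (Matrix (Fin n) (Fin n) ℂ)ˣ := Unitary.toUnits U with hudef
  have hucoe : (u : Matrix (Fin n) (Fin n) ℂ) = (U : Matrix (Fin n) (Fin n) ℂ) := rfl
  have huinv : ((u⁻¹ : (Matrix (Fin n) (Fin n) ℂ)ˣ) : Matrix (Fin n) (Fin n) ℂ)
      = star (U : Matrix (Fin n) (Fin n) ℂ) := rfl
  have hspec : Ac = (↑u : Matrix (Fin n) (Fin n) ℂ) * Matrix.diagonal (fun i => -(Complex.I * (θ i : ℂ))) * (↑u⁻¹ : Matrix (Fin n) (Fin n) ℂ) := by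
    have h2 : Ac = (-Complex.I) • (Complex.I • Ac) := by
      rw [smul_smul]
      norm_num [Complex.I_mul_I]
    calc Ac = (-Complex.I) • (Complex.I • Ac) := h2
      _ = (-Complex.I) • ((U : Matrix (Fin n) (Fin n) ℂ)
            * Matrix.diagonal (RCLike.ofReal ∘ θ) * star (U : Matrix (Fin n) (Fin n) ℂ)) := by
          exact congrArg ((-Complex.I) • ·) hH.spectral_theorem
      _ = (U : Matrix (Fin n) (Fin n) ℂ)
            * ((-Complex.I) • Matrix.diagonal (RCLike.ofReal ∘ θ))
            * star (U : Matrix (Fin n) (Fin n) ℂ) := by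
          rw [mul_smul_comm, smul_mul_assoc]
      _ = (↑u : Matrix (Fin n) (Fin n) ℂ) * Matrix.diagonal (fun i => -(Complex.I * (θ i : ℂ))) * (↑u⁻¹ : Matrix (Fin n) (Fin n) ℂ) := by
          rw [hucoe, huinv, ← Matrix.diagonal_smul]
          refine congrArg (fun v => (U : Matrix (Fin n) (Fin n) ℂ) * Matrix.diagonal v
            * star (U : Matrix (Fin n) (Fin n) ℂ)) (funext fun i => ?_)
          show (-Complex.I) • ((θ i : ℝ) : ℂ) = -(Complex.I * (θ i : ℂ))
          rw [smul_eq_mul]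
          ring
  -- the interpolating polynomial
  set s : Finset ℝ := Finset.image (fun i => -(θ i ^ 2)) Finset.univ with hsdef
  set f : ℝ → ℝ := fun x => hredA (Real.sqrt (-x)) / Real.sqrt (-x) with hfdef
  set r : Polynomial ℝ := Lagrange.interpolate s id f with hrdef
  have hrnode : ∀ i : Fin n, r.eval (-(θ i ^ 2)) = f (-(θ i ^ 2)) := by
    intro i
    have hmem : -(θ i ^ 2) ∈ s := Finset.mem_image_of_mem _ (Finset.mem_univ i)
    have h := Lagrange.eval_interpolate_at_node f (Set.injOn_id _) hmem
    exact h
  set p : Polynomial ℝ := X * r.comp (X ^ 2) with hpdef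
  have hpodd : p.comp (-X) = -p := by
    rw [hpdef, Polynomial.mul_comp, Polynomial.X_comp, Polynomial.comp_assoc,
      Polynomial.pow_comp, Polynomial.X_comp, neg_sq, neg_mul]
  have haeval_neg : aeval (-A) p = - aeval A p := by
    have h1 : aeval (-A) p = aeval A (p.comp (-X)) := by
      rw [Polynomial.aeval_comp]
      simp
    rw [h1, hpodd, map_neg]
  have heig : ∀ i : Fin n, aeval (-(Complex.I * (θ i : ℂ))) p
      = -(Complex.I * (hredA (θ i) : ℂ)) := by
    intro i
    rw [hpdef, _root_.map_mul, Polynomial.aeval_X, Polynomial.aeval_comp, map_pow, Polynomial.aeval_X]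
    have hsq : (-(Complex.I * (θ i : ℂ))) ^ 2 = algebraMap ℝ ℂ (-(θ i ^ 2)) := by
      rw [neg_sq, mul_pow, Complex.I_sq,
        show (algebraMap ℝ ℂ) (-(θ i ^ 2)) = ((-(θ i ^ 2) : ℝ) : ℂ) from rfl]
      push_cast
      ring
    rw [hsq, Polynomial.aeval_algebraMap_apply_eq_algebraMap_eval, hrnode i]
    have hfv : f (-(θ i ^ 2)) = hredA (Real.sqrt (θ i ^ 2)) / Real.sqrt (θ i ^ 2) := by
      rw [hfdef]
      simp
    rw [hfv]
    have hkey := key_hredA (θ i)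
    have hcast : (algebraMap ℝ ℂ) (hredA (Real.sqrt (θ i ^ 2)) / Real.sqrt (θ i ^ 2))
        = ((hredA (Real.sqrt (θ i ^ 2)) / Real.sqrt (θ i ^ 2) : ℝ) : ℂ) := rfl
    rw [hcast, ← hkey]
    push_cast
    ring
  have hBc : aeval Ac p
      = (↑u : Matrix (Fin n) (Fin n) ℂ) * Matrix.diagonal (fun i => -(Complex.I * (hredA (θ i) : ℂ))) * (↑u⁻¹ : Matrix (Fin n) (Fin n) ℂ) := by
    rw [hspec, aeval_units_conj', aeval_diagonal']
    simp only [heig]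
  set Φ : Matrix (Fin n) (Fin n) ℝ →ₐ[ℝ] Matrix (Fin n) (Fin n) ℂ :=
    (Algebra.ofId ℝ ℂ).mapMatrix with hΦdef
  have hΦAc : Φ A = Ac := rfl
  have hΦB : Φ (aeval A p) = aeval Ac p := by
    rw [← Polynomial.aeval_algHom_apply, hΦAc]
  refine ⟨aeval A p, ?_, ?_, ?_⟩
  · rw [transpose_aeval', hA, haeval_neg]
  · have hΦc : Continuous Φ := continuous_id.matrix_map Complex.continuous_ofReal
    have hinj : Function.Injective Φ := fun x y h =>
      Matrix.map_injective Complex.ofReal_injective h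
    apply hinj
    letI : NormedAlgebra ℚ (Matrix (Fin n) (Fin n) ℝ) := .restrictScalars ℚ ℝ _
    letI : NormedAlgebra ℚ (Matrix (Fin n) (Fin n) ℂ) := .restrictScalars ℚ ℂ _
    rw [NormedSpace.map_exp Φ hΦc, NormedSpace.map_exp Φ hΦc, hΦB, hΦAc, hBc, hspec,
      Matrix.exp_units_conj, Matrix.exp_units_conj, Matrix.exp_diagonal, Matrix.exp_diagonal]
    have hexp : ∀ z : ℂ, NormedSpace.exp z = Complex.exp z := by
      intro z
      rw [← Complex.exp_eq_exp_ℂ]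
    have hfun : (NormedSpace.exp fun i => -(Complex.I * (hredA (θ i) : ℂ)))
        = (NormedSpace.exp fun i => -(Complex.I * (θ i : ℂ))) := by
      rw [Pi.exp_def, Pi.exp_def]
      funext i
      rw [hexp, hexp]
      obtain ⟨k, hk⟩ := hredA_sub (θ i)
      rw [hk]
      rw [show -(Complex.I * ((θ i - 2 * Real.pi * k : ℝ) : ℂ))
          = -(Complex.I * (θ i : ℂ)) + (k : ℤ) * (2 * Real.pi * Complex.I) from by
        push_cast; ring]
      rw [Complex.exp_add, Complex.exp_int_mul_two_pi_mul_I, mul_one]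
    rw [hfun]
  · have h1 := l2_opNorm_real_le_complex (aeval A p)
    have hmap : (aeval A p).map (algebraMap ℝ ℂ) = aeval Ac p := hΦB
    rw [hmap, hBc] at h1
    set D : Matrix (Fin n) (Fin n) ℂ :=
      Matrix.diagonal (fun i => -(Complex.I * (hredA (θ i) : ℂ))) with hDdef
    have hD : ‖D‖ ≤ Real.pi := by
      refine l2_opNorm_diagonal_le _ Real.pi_pos.le fun i => ?_
      rw [norm_neg, norm_mul, Complex.norm_I, one_mul, Complex.norm_real]
      exact abs_hredA_le (θ i)
    have hmul : ‖(↑u : Matrix (Fin n) (Fin n) ℂ) * D * (↑u⁻¹ : Matrix (Fin n) (Fin n) ℂ)‖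
        ≤ ‖(↑u : Matrix (Fin n) (Fin n) ℂ)‖ * ‖D‖ * ‖(↑u⁻¹ : Matrix (Fin n) (Fin n) ℂ)‖ := by
      refine le_trans (Matrix.l2_opNorm_mul _ _) ?_
      exact mul_le_mul_of_nonneg_right (Matrix.l2_opNorm_mul _ _) (norm_nonneg _)
    have hUn : ‖(↑u⁻¹ : Matrix (Fin n) (Fin n) ℂ)‖ = ‖(↑u : Matrix (Fin n) (Fin n) ℂ)‖ := by
      rw [huinv, hucoe, Matrix.star_eq_conjTranspose, Matrix.l2_opNorm_conjTranspose]
    have hU2 : ‖(↑u : Matrix (Fin n) (Fin n) ℂ)‖ * ‖(↑u : Matrix (Fin n) (Fin n) ℂ)‖ ≤ 1 := by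
      rw [hucoe, ← Matrix.l2_opNorm_conjTranspose_mul_self]
      have hone : (U : Matrix (Fin n) (Fin n) ℂ)ᴴ * (U : Matrix (Fin n) (Fin n) ℂ) = 1 := by
        rw [← Matrix.star_eq_conjTranspose]
        exact Unitary.coe_star_mul_self U
      rw [hone, Matrix.cstar_norm_def, _root_.map_one, ContinuousLinearMap.one_def]
      exact ContinuousLinearMap.norm_id_le
    have hDn : (0:ℝ) ≤ ‖D‖ := norm_nonneg _
    calc ‖aeval A p‖ ≤ ‖(↑u : Matrix (Fin n) (Fin n) ℂ) * D * (↑u⁻¹ : Matrix (Fin n) (Fin n) ℂ)‖ := h1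
      _ ≤ ‖(↑u : Matrix (Fin n) (Fin n) ℂ)‖ * ‖D‖ * ‖(↑u⁻¹ : Matrix (Fin n) (Fin n) ℂ)‖ := hmul
      _ = ‖(↑u : Matrix (Fin n) (Fin n) ℂ)‖ * ‖(↑u : Matrix (Fin n) (Fin n) ℂ)‖ * ‖D‖ := by
          rw [hUn]; ring
      _ ≤ 1 * ‖D‖ := by
          exact mul_le_mul_of_nonneg_right hU2 hDn
      _ ≤ Real.pi := by rw [one_mul]; exact hD
end

section
/- For every skew-Hermitian matrix A ∈ ℂ^{n×n} (A^H = -A), there exists a skew-Hermitian matrix B ∈ ℂ^{n×n} such that exp(B) = exp(A) and ‖B‖₂ ≤ π. -/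
open Matrix

open scoped Matrix.Norms.L2Operator

lemma aux_l2_opNorm_diagonal_le {n : ℕ} (d : Fin n → ℂ) {c : ℝ} (hc : 0 ≤ c)
    (hd : ∀ i, ‖d i‖ ≤ c) : ‖Matrix.diagonal d‖ ≤ c := by
  rw [Matrix.l2_opNorm_def]
  refine ContinuousLinearMap.opNorm_le_bound _ hc fun x => ?_
  have key : ∀ i, ‖(toEuclideanCLM (𝕜 := ℂ) (Matrix.diagonal d) x) i‖ ≤ c * ‖x i‖ := by
    intro i
    have h1 : (toEuclideanCLM (𝕜 := ℂ) (Matrix.diagonal d) x) i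
        = (Matrix.diagonal d *ᵥ (x : Fin n → ℂ)) i := rfl
    rw [h1, Matrix.mulVec_diagonal, norm_mul]
    exact mul_le_mul_of_nonneg_right (hd i) (norm_nonneg _)
  rw [EuclideanSpace.norm_eq, EuclideanSpace.norm_eq]
  rw [show c * Real.sqrt (∑ i, ‖x i‖ ^ 2) = Real.sqrt (c ^ 2 * ∑ i, ‖x i‖ ^ 2) by
    rw [Real.sqrt_mul (sq_nonneg c), Real.sqrt_sq hc]]
  apply Real.sqrt_le_sqrt
  rw [Finset.mul_sum]
  apply Finset.sum_le_sum
  intro i _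
  calc ‖(toEuclideanCLM (𝕜 := ℂ) (Matrix.diagonal d) x) i‖ ^ 2
      ≤ (c * ‖x i‖) ^ 2 := by
        apply pow_le_pow_left₀ (norm_nonneg _) (key i)
    _ = c ^ 2 * ‖x i‖ ^ 2 := by ring

lemma aux_norm_unitary {n : ℕ} (U : Matrix.unitaryGroup (Fin n) ℂ) :
    ‖(U : Matrix (Fin n) (Fin n) ℂ)‖ ≤ 1 := by
  have h1 : ‖(1 : Matrix (Fin n) (Fin n) ℂ)‖ ≤ 1 := by
    rw [Matrix.cstar_norm_def, _root_.map_one]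
    exact ContinuousLinearMap.norm_id_le
  have h2 : (U : Matrix (Fin n) (Fin n) ℂ)ᴴ * U = 1 := by
    simpa [Matrix.star_eq_conjTranspose] using (Matrix.mem_unitaryGroup_iff').mp U.2
  have h3 := Matrix.l2_opNorm_conjTranspose_mul_self (U : Matrix (Fin n) (Fin n) ℂ)
  rw [h2] at h3
  nlinarith [norm_nonneg (U : Matrix (Fin n) (Fin n) ℂ)]


/-- For every complex skew-Hermitian matrix `A` (`Aᴴ = -A`), there exists a skew-Hermitian
matrix `B` with the same matrix exponential and spectral norm at most `π`. -/
theorem exists_skewHermitian_exp_eq_norm_le_pi {n : ℕ} (A : Matrix (Fin n) (Fin n) ℂ)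
    (hA : Aᴴ = -A) :
    ∃ B : Matrix (Fin n) (Fin n) ℂ,
      Bᴴ = -B ∧ NormedSpace.exp B = NormedSpace.exp A ∧ ‖B‖ ≤ Real.pi := by
  have hH : (Complex.I • A).IsHermitian := by
    unfold Matrix.IsHermitian
    rw [Matrix.conjTranspose_smul, hA]
    simp
  set U := hH.eigenvectorUnitary with hU
  set lam := hH.eigenvalues with hlam
  -- reduced eigenvalues
  set mu : Fin n → ℝ := fun i => lam i - 2 * Real.pi * (round (lam i / (2 * Real.pi)) : ℤ)
    with hmu
  have hmu_le : ∀ i, |mu i| ≤ Real.pi := by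
    intro i
    have h := abs_sub_round (lam i / (2 * Real.pi))
    have h2pi : (0:ℝ) < 2 * Real.pi := by positivity
    have : mu i = 2 * Real.pi * (lam i / (2 * Real.pi) - round (lam i / (2 * Real.pi))) := by
      rw [hmu]
      field_simp
    rw [this, abs_mul, abs_of_pos h2pi]
    calc 2 * Real.pi * |lam i / (2 * Real.pi) - ↑(round (lam i / (2 * Real.pi)))|
        ≤ 2 * Real.pi * (1/2) := by
          apply mul_le_mul_of_nonneg_left h (le_of_lt h2pi)
      _ = Real.pi := by ring
  -- B
  set d : Fin n → ℂ := fun i => -Complex.I * (mu i : ℂ) with hd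
  set B : Matrix (Fin n) (Fin n) ℂ :=
    (U : Matrix (Fin n) (Fin n) ℂ) * Matrix.diagonal d * (U : Matrix (Fin n) (Fin n) ℂ)ᴴ with hB
  have hUstar : star (U : Matrix (Fin n) (Fin n) ℂ) = (U : Matrix (Fin n) (Fin n) ℂ)ᴴ := rfl
  refine ⟨B, ?_, ?_, ?_⟩
  · rw [hB]
    rw [Matrix.conjTranspose_mul, Matrix.conjTranspose_mul,
      Matrix.conjTranspose_conjTranspose, Matrix.diagonal_conjTranspose]
    have hsd : star d = -d := by
      funext i
      simp only [Pi.star_apply, Pi.neg_apply, hd, star_mul', Complex.star_def,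
        Complex.conj_I, Complex.conj_ofReal, star_neg]
      ring
    rw [hsd]
    have hdn : Matrix.diagonal (-d) = -Matrix.diagonal d := by
      ext i j
      rcases eq_or_ne i j with h | h <;> simp [Matrix.diagonal_apply, h]
    rw [hdn, neg_mul, mul_neg, mul_assoc]
  · -- exponentials equal
    have hA_eq : A = (U : Matrix (Fin n) (Fin n) ℂ) *
        Matrix.diagonal (fun i => -Complex.I * (lam i : ℂ)) * (U : Matrix (Fin n) (Fin n) ℂ)ᴴ := by
      have hspec := hH.spectral_theorem
      have : A = (-Complex.I) • (Complex.I • A) := by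
        rw [smul_smul]
        simp [Complex.I_mul_I]
      have hdiag : Matrix.diagonal (fun i => -Complex.I * (lam i : ℂ))
          = (-Complex.I) • Matrix.diagonal (RCLike.ofReal ∘ lam) := by
        ext i j
        rcases eq_or_ne i j with h | h <;>
          simp [Matrix.smul_apply, Matrix.diagonal_apply, h, smul_eq_mul]
      rw [this, hspec, Unitary.conjStarAlgAut_apply, hUstar, hdiag, mul_smul_comm, smul_mul_assoc]
    -- conjugation units
    have hUU : (U : Matrix (Fin n) (Fin n) ℂ) * (U : Matrix (Fin n) (Fin n) ℂ)ᴴ = 1 := by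
      simpa [Matrix.star_eq_conjTranspose] using (Matrix.mem_unitaryGroup_iff).mp U.2
    have hUU' : (U : Matrix (Fin n) (Fin n) ℂ)ᴴ * (U : Matrix (Fin n) (Fin n) ℂ) = 1 := by
      simpa [Matrix.star_eq_conjTranspose] using (Matrix.mem_unitaryGroup_iff').mp U.2
    set Uu : (Matrix (Fin n) (Fin n) ℂ)ˣ :=
      ⟨(U : Matrix (Fin n) (Fin n) ℂ), (U : Matrix (Fin n) (Fin n) ℂ)ᴴ, hUU, hUU'⟩ with hUu
    have hconj : ∀ D : Matrix (Fin n) (Fin n) ℂ,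
        NormedSpace.exp ((U : Matrix (Fin n) (Fin n) ℂ) * D * (U : Matrix (Fin n) (Fin n) ℂ)ᴴ)
        = (U : Matrix (Fin n) (Fin n) ℂ) * NormedSpace.exp D *
          (U : Matrix (Fin n) (Fin n) ℂ)ᴴ := by
      intro D
      have := Matrix.exp_units_conj Uu D
      simpa [hUu] using this
    have hexp : NormedSpace.exp d
        = NormedSpace.exp (fun i => -Complex.I * (lam i : ℂ)) := by
      rw [Pi.exp_def, Pi.exp_def]
      funext i
      simp only [← Complex.exp_eq_exp_ℂ]
      have hdi : d i = -Complex.I * (mu i : ℂ) := rfl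
      rw [hdi]
      have : -Complex.I * (mu i : ℂ) =
        -Complex.I * (lam i : ℂ) + (round (lam i / (2 * Real.pi)) : ℤ) *
            (2 * Real.pi * Complex.I) := by
        simp only [hmu]
        push_cast
        ring
      rw [this, Complex.exp_add, Complex.exp_int_mul_two_pi_mul_I, mul_one]
    rw [hB, hA_eq, hconj, hconj, Matrix.exp_diagonal, Matrix.exp_diagonal, hexp]
  · -- norm bound
    have hDnorm : ‖Matrix.diagonal d‖ ≤ Real.pi := by
      apply aux_l2_opNorm_diagonal_le _ Real.pi_pos.le
      intro i
      rw [hd]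
      simp only [norm_mul, norm_neg, Complex.norm_I, one_mul, Complex.norm_real,
        Real.norm_eq_abs]
      simpa using hmu_le i
    calc ‖B‖ ≤ ‖(U : Matrix (Fin n) (Fin n) ℂ) * Matrix.diagonal d‖ *
          ‖(U : Matrix (Fin n) (Fin n) ℂ)ᴴ‖ := Matrix.l2_opNorm_mul _ _
      _ ≤ ‖(U : Matrix (Fin n) (Fin n) ℂ)‖ * ‖Matrix.diagonal d‖ *
          ‖(U : Matrix (Fin n) (Fin n) ℂ)ᴴ‖ := by
          apply mul_le_mul_of_nonneg_right (Matrix.l2_opNorm_mul _ _) (norm_nonneg _)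
      _ ≤ 1 * Real.pi * 1 := by
          have h1 := aux_norm_unitary U
          have h2 : ‖(U : Matrix (Fin n) (Fin n) ℂ)ᴴ‖ ≤ 1 := by
            rw [Matrix.l2_opNorm_conjTranspose]; exact h1
          exact mul_le_mul
            (mul_le_mul h1 hDnorm (norm_nonneg _) zero_le_one) h2 (norm_nonneg _)
            (by positivity)
      _ = Real.pi := by ring
end

section
/- For every real skew-symmetric matrix A ∈ ℝ^{n×n} (Aᵀ = -A), there exist a real orthogonal matrix Q ∈ ℝ^{n×n} and real numbers λ_0, …, λ_{⌊n/2⌋-1} such that A = Q Σ Qᵀ, where Σ ∈ ℝ^{n×n} is the block-diagonal matrix whose i-th 2×2 diagonal block (for 0 ≤ i < ⌊n/2⌋) is [[0, λ_i], [-λ_i, 0]], with all remaining entries zero (in particular, when n is odd the last diagonal entry of Σ is 0). -/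
open Matrix

/-- The real block-diagonal matrix whose `i`-th `2×2` diagonal block (for `0 ≤ i < ⌊n/2⌋`) is
`[[0, λ_i], [-λ_i, 0]]`, with all remaining entries zero (in particular, when `n` is odd the last
diagonal entry is `0`). -/
def skewBlockDiagonal {n : ℕ} (lam : Fin (n / 2) → ℝ) : Matrix (Fin n) (Fin n) ℝ :=
  Matrix.of fun i j =>
    if h : (i : ℕ) % 2 = 0 ∧ (i : ℕ) + 1 = (j : ℕ) then
      lam ⟨(i : ℕ) / 2, by have := j.isLt; omega⟩
    else if h' : (j : ℕ) % 2 = 0 ∧ (j : ℕ) + 1 = (i : ℕ) then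
      -lam ⟨(j : ℕ) / 2, by have := i.isLt; omega⟩
    else 0

lemma skewBlockDiagonal_zero {n : ℕ} :
    skewBlockDiagonal (fun _ : Fin (n / 2) => (0:ℝ)) = 0 := by
  ext i j
  simp only [skewBlockDiagonal, of_apply]
  split_ifs <;> simp

/-- the 2×2 block `[[0, x], [-x, 0]]` in an omega-friendly form. -/
def skew2 (x : ℝ) : Matrix (Fin 2) (Fin 2) ℝ :=
  Matrix.of fun i j =>
    if (i : ℕ) = 0 ∧ (j : ℕ) = 1 then x
    else if (i : ℕ) = 1 ∧ (j : ℕ) = 0 then -x else 0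

def blockEquiv (m : ℕ) : Fin 2 ⊕ Fin m ≃ Fin (m + 2) :=
  finSumFinEquiv.trans (finCongr (by omega))

lemma blockEquiv_inl (m : ℕ) (i : Fin 2) : ((blockEquiv m (Sum.inl i) : Fin (m+2)) : ℕ) = i := by
  simp [blockEquiv]

lemma blockEquiv_inr (m : ℕ) (j : Fin m) :
    ((blockEquiv m (Sum.inr j) : Fin (m+2)) : ℕ) = 2 + j := by
  simp [blockEquiv]; omega

lemma skewBlockDiagonal_shift (m : ℕ) (lam : Fin ((m + 2) / 2) → ℝ) :
    (skewBlockDiagonal lam).submatrix (blockEquiv m) (blockEquiv m) =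
      fromBlocks (skew2 (lam ⟨0, by omega⟩)) 0 0
        (skewBlockDiagonal (fun k : Fin (m / 2) => lam ⟨(k : ℕ) + 1, by omega⟩)) := by
  ext p q
  rcases p with i | i <;> rcases q with j | j <;>
    simp only [submatrix_apply, skewBlockDiagonal, skew2, of_apply, fromBlocks_apply₁₁,
      fromBlocks_apply₁₂, fromBlocks_apply₂₁, fromBlocks_apply₂₂, Matrix.zero_apply]
  · have hi := blockEquiv_inl m i
    have hj := blockEquiv_inl m j
    split_ifs <;>
      first
        | rfl
        | omega
        | (congr 1 <;> simp only [Fin.mk.injEq, Fin.val_mk] <;> omega)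
        | (congr 2 <;> simp only [Fin.mk.injEq, Fin.val_mk] <;> omega)
  · have hi := blockEquiv_inl m i
    have hj := blockEquiv_inr m j
    split_ifs <;> first | rfl | omega
  · have hi := blockEquiv_inr m i
    have hj := blockEquiv_inl m j
    split_ifs <;> first | rfl | omega
  · have hi := blockEquiv_inr m i
    have hj := blockEquiv_inr m j
    split_ifs <;>
      first
        | rfl
        | omega
        | (congr 1 <;> simp only [Fin.mk.injEq, Fin.val_mk] <;> omega)
        | (congr 2 <;> simp only [Fin.mk.injEq, Fin.val_mk] <;> omega)

lemma inner_eq_dot {n : ℕ} (x y : EuclideanSpace ℝ (Fin n)) :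
    (inner ℝ x y : ℝ) = (⇑x) ⬝ᵥ (⇑y) := by
  simp [PiLp.inner_apply, dotProduct, RCLike.inner_apply, mul_comm]

lemma skewdot {n : ℕ} {A : Matrix (Fin n) (Fin n) ℝ} (hA : Aᵀ = -A) (x y : Fin n → ℝ) :
    x ⬝ᵥ (A *ᵥ y) = -((A *ᵥ x) ⬝ᵥ y) := by
  rw [dotProduct_mulVec, show x ᵥ* A = Aᵀ *ᵥ x by rw [← vecMul_transpose, transpose_transpose],
    hA, neg_mulVec, neg_dotProduct]

lemma exists_pair {n : ℕ} (A : Matrix (Fin n) (Fin n) ℝ) (hA : Aᵀ = -A) (hA0 : A ≠ 0) :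
    ∃ (l : ℝ) (u v : Fin n → ℝ), u ⬝ᵥ u = 1 ∧ v ⬝ᵥ v = 1 ∧ u ⬝ᵥ v = 0 ∧
      A *ᵥ u = -(l • v) ∧ A *ᵥ v = l • u := by
  have hS : (A * A).IsHermitian := by
    rw [Matrix.IsHermitian, conjTranspose_eq_transpose_of_trivial, transpose_mul, hA]
    simp
  by_cases hz : ∀ i, hS.eigenvalues i = 0
  · exfalso
    have hSz : A * A = 0 := by
      have h0 : hS.eigenvalues = fun _ => 0 := funext hz
      rw [hS.spectral_theorem, h0]
      simp [Function.comp_def]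
    apply hA0
    ext i j
    have h1 : (A *ᵥ Pi.single j 1) ⬝ᵥ (A *ᵥ Pi.single j 1) = 0 := by
      have := skewdot hA (Pi.single j 1) (A *ᵥ Pi.single j 1)
      rw [mulVec_mulVec, hSz] at this
      simp only [zero_mulVec, dotProduct_zero] at this
      linarith
    have h2 : A *ᵥ Pi.single j 1 = 0 := by
      rwa [dotProduct_self_eq_zero] at h1
    have := congrFun h2 i
    simpa [mulVec_single] using this
  · push_neg at hz
    obtain ⟨i, hμ⟩ := hz
    set μ := hS.eigenvalues i with hμdef
    set u : Fin n → ℝ := ⇑(hS.eigenvectorBasis i) with hudef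
    have hSu : (A * A) *ᵥ u = μ • u := hS.mulVec_eigenvectorBasis i
    have hu1 : u ⬝ᵥ u = 1 := by
      have := (orthonormal_iff_ite.mp hS.eigenvectorBasis.orthonormal) i i
      rw [inner_eq_dot] at this
      simpa using this
    set w : Fin n → ℝ := A *ᵥ u with hwdef
    have hww : w ⬝ᵥ w = -μ := by
      have h := skewdot hA u w
      rw [hwdef, mulVec_mulVec, hSu] at h
      have : u ⬝ᵥ (μ • u) = μ := by rw [dotProduct_smul, hu1]; simp
      rw [this] at h
      linarith
    have hμneg : μ < 0 := by
      rcases lt_trichotomy μ 0 with h | h | h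
      · exact h
      · exact absurd h hμ
      · have hw0 : (0:ℝ) ≤ w ⬝ᵥ w := Finset.sum_nonneg fun k _ => mul_self_nonneg (w k)
        nlinarith
    set l : ℝ := Real.sqrt (-μ) with hldef
    have hl0 : 0 < l := Real.sqrt_pos.mpr (by linarith)
    have hl2 : l * l = -μ := Real.mul_self_sqrt (by linarith)
    refine ⟨l, u, (-(l⁻¹)) • w, hu1, ?_, ?_, ?_, ?_⟩
    · rw [dotProduct_smul, smul_dotProduct, hww]
      simp only [smul_eq_mul]
      field_simp
      nlinarith
    · rw [dotProduct_smul]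
      have huw : u ⬝ᵥ w = 0 := by
        have := skewdot hA u u
        rw [← hwdef, dotProduct_comm w u] at this
        linarith
      rw [huw]; simp
    · rw [smul_smul]
      have : l * -l⁻¹ = -1 := by field_simp
      rw [← hwdef, ← neg_smul, this]
      simp
    · rw [mulVec_smul, hwdef, mulVec_mulVec, hSu, smul_smul]
      congr 1
      field_simp
      nlinarith

lemma exists_basis {n : ℕ} (hn : 2 ≤ n) (u v : Fin n → ℝ) (hu : u ⬝ᵥ u = 1)
    (hv : v ⬝ᵥ v = 1) (huv : u ⬝ᵥ v = 0) :
    ∃ b : OrthonormalBasis (Fin n) ℝ (EuclideanSpace ℝ (Fin n)),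
      ⇑(b ⟨0, by omega⟩) = u ∧ ⇑(b ⟨1, by omega⟩) = v := by
  set i0 : Fin n := ⟨0, by omega⟩
  set i1 : Fin n := ⟨1, by omega⟩
  set w : Fin n → EuclideanSpace ℝ (Fin n) :=
    fun k => if (k : ℕ) = 0 then (WithLp.equiv 2 _).symm u else (WithLp.equiv 2 _).symm v
    with hw
  have hwu : ⇑(w i0) = u := rfl
  have hwv : ⇑(w i1) = v := rfl
  set s : Set (Fin n) := {i0, i1} with hs
  have horth : Orthonormal ℝ (s.restrict w) := by
    rw [orthonormal_iff_ite]
    rintro ⟨i, hi⟩ ⟨j, hj⟩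
    simp only [Set.restrict_apply, Set.restrict, inner_eq_dot]
    rcases hi with hi | hi <;> rcases hj with hj | hj <;> subst hi <;> subst hj
    · simp [hwu, hu]
    · have : i0 ≠ i1 := by simp [i0, i1, Fin.ext_iff]
      simp [hwu, hwv, huv, this, Subtype.ext_iff]
    · have : i1 ≠ i0 := by simp [i0, i1, Fin.ext_iff]
      rw [hwv, hwu, dotProduct_comm]
      simp [huv, this, Subtype.ext_iff]
    · simp [hwv, hv]
  obtain ⟨b, hb⟩ := horth.exists_orthonormalBasis_extension_of_card_eq
    (by simp [finrank_euclideanSpace])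
  refine ⟨b, ?_, ?_⟩
  · rw [hb i0 (by simp [s])]; rfl
  · rw [hb i1 (by simp [s])]; rfl

/-- Every real skew-symmetric matrix `A` (`Aᵀ = -A`) can be written as `A = Q Σ Qᵀ` where `Q` is
a real orthogonal matrix and `Σ` is the block-diagonal matrix with `2×2` blocks
`[[0, λ_i], [-λ_i, 0]]`. -/
theorem skewSymmetric_block_decomposition {n : ℕ} (A : Matrix (Fin n) (Fin n) ℝ)
    (hA : Aᵀ = -A) :
    ∃ (Q : Matrix (Fin n) (Fin n) ℝ) (lam : Fin (n / 2) → ℝ),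
      Qᵀ * Q = 1 ∧ Q * Qᵀ = 1 ∧ A = Q * skewBlockDiagonal lam * Qᵀ := by
  induction n using Nat.strong_induction_on with
  | _ n IH =>
  by_cases hA0 : A = 0
  · refine ⟨1, fun _ => 0, by simp, by simp, ?_⟩
    rw [skewBlockDiagonal_zero, hA0]
    simp
  rcases n with _ | _ | m
  · exact absurd (by ext i j; exact i.elim0) hA0
  · refine absurd ?_ hA0
    ext i j
    have h1 := congrFun (congrFun hA i) j
    have hij : i = j := Fin.ext (by omega)
    subst hij
    simp only [transpose_apply, Matrix.neg_apply, Matrix.zero_apply] at h1 ⊢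
    linarith
  · -- main case : n = m + 2
    obtain ⟨l, u, v, hu, hv, huv, hAu, hAv⟩ := exists_pair A hA hA0
    obtain ⟨b, hb0, hb1⟩ := exists_basis (by omega) u v hu hv huv
    set Q₀ : Matrix (Fin (m+2)) (Fin (m+2)) ℝ := Matrix.of fun i j => b j i with hQ₀def
    have horth := orthonormal_iff_ite.mp b.orthonormal
    have hQ₀ : Q₀ᵀ * Q₀ = 1 := by
      ext i j
      have h := horth i j
      rw [inner_eq_dot] at h
      simp only [mul_apply, transpose_apply, hQ₀def, of_apply, Matrix.one_apply]
      simpa [dotProduct] using h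
    have hQ₀' : Q₀ * Q₀ᵀ = 1 := mul_eq_one_comm.mp hQ₀
    set B := Q₀ᵀ * A * Q₀ with hBdef
    have hBapply : ∀ i j, B i j = ⇑(b i) ⬝ᵥ (A *ᵥ ⇑(b j)) := by
      intro i j
      calc B i j = ∑ k, ∑ p, (b i p * A p k) * b j k := by
            simp [hBdef, hQ₀def, mul_apply, Finset.sum_mul, transpose_apply]
        _ = ∑ p, ∑ k, (b i p * A p k) * b j k := Finset.sum_comm
        _ = ⇑(b i) ⬝ᵥ (A *ᵥ ⇑(b j)) := by
            simp [dotProduct, mulVec, Finset.mul_sum, mul_assoc]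
    have hBskew : Bᵀ = -B := by
      rw [hBdef, transpose_mul, transpose_mul, transpose_transpose, hA]
      simp [Matrix.mul_assoc]
    have hrow : ∀ i j, B i j = -(B j i) := by
      intro i j
      have := congrFun (congrFun hBskew j) i
      simpa [transpose_apply] using this
    have hdotu : ∀ i : Fin (m+2), ⇑(b i) ⬝ᵥ u = if i = ⟨0, by omega⟩ then 1 else 0 := by
      intro i
      have h := horth i ⟨0, by omega⟩
      rw [inner_eq_dot, hb0] at h
      exact h
    have hdotv : ∀ i : Fin (m+2), ⇑(b i) ⬝ᵥ v = if i = ⟨1, by omega⟩ then 1 else 0 := by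
      intro i
      have h := horth i ⟨1, by omega⟩
      rw [inner_eq_dot, hb1] at h
      exact h
    have hcol0 : ∀ i, B i ⟨0, by omega⟩ = if i = ⟨1, by omega⟩ then -l else 0 := by
      intro i
      rw [hBapply, hb0, hAu, dotProduct_neg, dotProduct_smul, hdotv i]
      split_ifs <;> simp
    have hcol1 : ∀ i, B i ⟨1, by omega⟩ = if i = ⟨0, by omega⟩ then l else 0 := by
      intro i
      rw [hBapply, hb1, hAv, dotProduct_smul, hdotu i]
      split_ifs <;> simp
    set C : Matrix (Fin m) (Fin m) ℝ :=
      Matrix.of fun i j => B (blockEquiv m (Sum.inr i)) (blockEquiv m (Sum.inr j)) with hCdef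
    have hC : Cᵀ = -C := by
      ext i j
      simpa [hCdef, transpose_apply] using hrow (blockEquiv m (Sum.inr j)) (blockEquiv m (Sum.inr i))
    have hne10 : ∀ j : Fin m, blockEquiv m (Sum.inr j) ≠ (⟨0, by omega⟩ : Fin (m+2)) := by
      intro j h
      have h2 := blockEquiv_inr m j
      rw [h] at h2
      simp only [Fin.val_mk] at h2
      omega
    have hne11 : ∀ j : Fin m, blockEquiv m (Sum.inr j) ≠ (⟨1, by omega⟩ : Fin (m+2)) := by
      intro j h
      have h2 := blockEquiv_inr m j
      rw [h] at h2
      simp only [Fin.val_mk] at h2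
      omega
    have e0 : ∀ i : Fin 2, (i:ℕ) = 0 → blockEquiv m (Sum.inl i) = (⟨0, by omega⟩ : Fin (m+2)) := by
      intro i h
      apply Fin.ext
      rw [blockEquiv_inl]
      simpa using h
    have e1 : ∀ i : Fin 2, (i:ℕ) = 1 → blockEquiv m (Sum.inl i) = (⟨1, by omega⟩ : Fin (m+2)) := by
      intro i h
      apply Fin.ext
      rw [blockEquiv_inl]
      simpa using h
    have hBblock : B.submatrix (blockEquiv m) (blockEquiv m) = fromBlocks (skew2 l) 0 0 C := by
      ext p q
      rcases p with i | i <;> rcases q with j | j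
      · simp only [submatrix_apply, fromBlocks_apply₁₁, skew2, of_apply]
        have hi2 := i.isLt
        have hj2 := j.isLt
        by_cases h0 : (i:ℕ) = 0 <;> by_cases h0' : (j:ℕ) = 0
        · rw [e0 i h0, e0 j h0', hcol0, if_neg (by simp [Fin.ext_iff]),
            if_neg (by omega), if_neg (by omega)]
        · have hj1 : (j:ℕ) = 1 := by omega
          rw [e0 i h0, e1 j hj1, hcol1, if_pos rfl, if_pos (by omega)]
        · have hi1 : (i:ℕ) = 1 := by omega
          rw [e1 i hi1, e0 j h0', hcol0, if_pos rfl, if_neg (by omega), if_pos (by omega)]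
        · have hi1 : (i:ℕ) = 1 := by omega
          have hj1 : (j:ℕ) = 1 := by omega
          rw [e1 i hi1, e1 j hj1, hcol1, if_neg (by simp [Fin.ext_iff]),
            if_neg (by omega), if_neg (by omega)]
      · simp only [submatrix_apply, fromBlocks_apply₁₂, Matrix.zero_apply]
        rw [hrow]
        have hi2 := i.isLt
        by_cases h0 : (i:ℕ) = 0
        · rw [e0 i h0, hcol0, if_neg (hne11 j)]
          simp
        · have hi1 : (i:ℕ) = 1 := by omega
          rw [e1 i hi1, hcol1, if_neg (hne10 j)]
          simp
      · simp only [submatrix_apply, fromBlocks_apply₂₁, Matrix.zero_apply]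
        have hj2 := j.isLt
        by_cases h0 : (j:ℕ) = 0
        · rw [e0 j h0, hcol0, if_neg (hne11 i)]
        · have hj1 : (j:ℕ) = 1 := by omega
          rw [e1 j hj1, hcol1, if_neg (hne10 i)]
      · simp only [submatrix_apply, fromBlocks_apply₂₂, hCdef, of_apply]
    have hBeq : B = (fromBlocks (skew2 l) 0 0 C).submatrix
        (blockEquiv m).symm (blockEquiv m).symm := by
      rw [← hBblock]
      ext i j
      simp [submatrix_apply]
    obtain ⟨R, mu, hR1, hR2, hCeq⟩ := IH m (by omega) C hC
    set lam : Fin ((m+2)/2) → ℝ :=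
      fun k => if hk : (k:ℕ) = 0 then l else mu ⟨(k:ℕ) - 1, by have := k.isLt; omega⟩ with hlam
    have hlam0 : lam ⟨0, by omega⟩ = l := by simp [hlam]
    have hlamsucc : (fun k : Fin (m/2) => lam ⟨(k:ℕ)+1, by have := k.isLt; omega⟩) = mu := by
      funext k
      simp only [hlam]
      rw [dif_neg (by simp)]
      exact congrArg mu (Fin.ext (by simp))
    have hSigma : skewBlockDiagonal lam =
        (fromBlocks (skew2 l) 0 0 (skewBlockDiagonal mu)).submatrix
          (blockEquiv m).symm (blockEquiv m).symm := by
      have h := skewBlockDiagonal_shift m lam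
      rw [hlam0, hlamsucc] at h
      rw [← h]
      ext i j
      simp [submatrix_apply]
    set P := (fromBlocks (1 : Matrix (Fin 2) (Fin 2) ℝ) 0 0 R).submatrix
        (blockEquiv m).symm (blockEquiv m).symm with hPdef
    have hPt : Pᵀ = (fromBlocks (1 : Matrix (Fin 2) (Fin 2) ℝ) 0 0 Rᵀ).submatrix
        (blockEquiv m).symm (blockEquiv m).symm := by
      rw [hPdef, transpose_submatrix, fromBlocks_transpose]
      simp
    have hPP : Pᵀ * P = 1 := by
      have hblk : fromBlocks (1 : Matrix (Fin 2) (Fin 2) ℝ) 0 0 Rᵀ *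
          fromBlocks (1 : Matrix (Fin 2) (Fin 2) ℝ) 0 0 R = 1 := by
        rw [fromBlocks_multiply]
        simp [hR1, fromBlocks_one]
      rw [hPt, hPdef, submatrix_mul_equiv, hblk, submatrix_one_equiv]
    have hQP : P * skewBlockDiagonal lam * Pᵀ = B := by
      rw [hSigma, hPt, hPdef, submatrix_mul_equiv, submatrix_mul_equiv, fromBlocks_multiply,
        fromBlocks_multiply, hBeq]
      simp [Matrix.mul_assoc, hCeq]
    have h1 : (Q₀ * P)ᵀ * (Q₀ * P) = 1 := by
      rw [transpose_mul]
      calc Pᵀ * Q₀ᵀ * (Q₀ * P) = Pᵀ * (Q₀ᵀ * Q₀) * P := by simp only [Matrix.mul_assoc]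
        _ = 1 := by rw [hQ₀, Matrix.mul_one, hPP]
    refine ⟨Q₀ * P, lam, h1, mul_eq_one_comm.mp h1, ?_⟩
    rw [transpose_mul]
    calc A = Q₀ * B * Q₀ᵀ := by
          rw [hBdef,
            show Q₀ * (Q₀ᵀ * A * Q₀) * Q₀ᵀ = (Q₀ * Q₀ᵀ) * A * (Q₀ * Q₀ᵀ) by
              simp only [Matrix.mul_assoc], hQ₀']
          simp
      _ = Q₀ * (P * skewBlockDiagonal lam * Pᵀ) * Q₀ᵀ := by rw [hQP]
      _ = Q₀ * P * skewBlockDiagonal lam * (Pᵀ * Q₀ᵀ) := by simp only [Matrix.mul_assoc]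
end
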